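/- arXiv:2003.00909 — 3 statements merged into one kernel-verified Lean document; each statement's English description precedes it below -/
import Mathlib

section
/- Let Q be a finite set of points in ℝ^d, and let Δ be a d-dimensional simplex with vertices in Q having maximal d-dimensional volume among all simplices spanned by d+1 points of Q. Then every point of Q lies in the simplex Δ* obtained by reflecting-expanding Δ: namely Δ* is the intersection over all vertices p of Δ of the halfspace bounded by the hyperplane through p parallel to the opposite facet and containing Δ. -/
open MeasureTheory

open Matrix in
theorem det_id_add_smulRight {E : Type*} [NormedAddCommGroup E] [NormedSpace ℝ E]
    [FiniteDimensional ℝ E] (g : E →ₗ[ℝ] ℝ) (v : E) :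
    LinearMap.det (LinearMap.id + g.smulRight v) = 1 + g v := by
  classical
  let b := Module.finBasis ℝ E
  rw [← LinearMap.det_toMatrix b]
  have : LinearMap.toMatrix b b (LinearMap.id + g.smulRight v)
      = 1 + replicateCol Unit (fun i => b.repr v i) * replicateRow Unit (fun k => g (b k)) := by
    ext i k
    simp only [LinearMap.toMatrix_apply, Matrix.add_apply, Matrix.mul_apply,
      Matrix.one_apply, LinearMap.add_apply, LinearMap.id_apply,
      LinearMap.smulRight_apply, map_add, _root_.map_smul, Finsupp.add_apply,
      Finsupp.smul_apply, smul_eq_mul, Module.Basis.repr_self, Finset.sum_const,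
      Finset.card_univ, Fintype.card_unit, one_smul, replicateCol_apply, replicateRow_apply]
    rw [Finsupp.single_apply, mul_comm]
    congr 1
    simp [eq_comm]
  rw [this, det_one_add_replicateCol_mul_replicateRow]
  congr 1
  rw [dotProduct]
  calc ∑ i, g (b i) * b.repr v i = g (∑ i, b.repr v i • b i) := by
        simp [map_sum, mul_comm, -Module.Basis.sum_repr]
      _ = g v := by rw [Module.Basis.sum_repr]

/-- Let `Q ⊆ ℝ^d` be a finite set in general position and let `Δ = conv(p 0, …, p d)` be a
simplex with vertices in `Q` of maximal volume among all simplices spanned by `d+1` points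
of `Q`. For each vertex `p j`, let `{x | f j x ≤ f j (p j)}` be the halfspace bounded by the
hyperplane through `p j` parallel to the opposite facet (encoded by a nonzero functional
`f j` vanishing on the direction of the facet's affine hull) containing `Δ`. Then every
point of `Q` lies in `Δ* = ⋂ j H_j^+`. -/
theorem maximal_simplex_expanded_contains
    (d : ℕ) (hd : 1 ≤ d) (Q : Finset (EuclideanSpace ℝ (Fin d)))
    (hgp : ∀ T : Finset (EuclideanSpace ℝ (Fin d)), ↑T ⊆ (Q : Set (EuclideanSpace ℝ (Fin d))) →
      T.card ≤ d + 1 →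
      AffineIndependent ℝ (fun x : T => (x : EuclideanSpace ℝ (Fin d))))
    (p : Fin (d + 1) → EuclideanSpace ℝ (Fin d))
    (hp : AffineIndependent ℝ p) (hpQ : Set.range p ⊆ (Q : Set (EuclideanSpace ℝ (Fin d))))
    (hmax : ∀ q : Fin (d + 1) → EuclideanSpace ℝ (Fin d),
      Set.range q ⊆ (Q : Set (EuclideanSpace ℝ (Fin d))) →
      volume (convexHull ℝ (Set.range q)) ≤ volume (convexHull ℝ (Set.range p)))
    (f : Fin (d + 1) → (EuclideanSpace ℝ (Fin d) →ₗ[ℝ] ℝ))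
    (hf0 : ∀ j, f j ≠ 0)
    (hker : ∀ j, ∀ w ∈ (affineSpan ℝ (p '' {i | i ≠ j})).direction, f j w = 0)
    (hside : ∀ j, convexHull ℝ (Set.range p) ⊆ {x | f j x ≤ f j (p j)}) :
    (Q : Set (EuclideanSpace ℝ (Fin d))) ⊆ ⋂ j, {x | f j x ≤ f j (p j)} := by
  classical
  intro x hx
  rw [Set.mem_iInter]
  intro j
  by_contra hcon
  simp only [Set.mem_setOf_eq, not_le] at hcon
  set b : ℝ := f j (p j) with hb
  obtain ⟨i0, hi0⟩ : ∃ i : Fin (d + 1), i ≠ j := by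
    rcases Decidable.eq_or_ne j 0 with h | h
    · exact ⟨⟨1, by omega⟩, by simp [h, Fin.ext_iff]⟩
    · exact ⟨0, Ne.symm h⟩
  set a : ℝ := f j (p i0) with hadef
  have ha : ∀ i, i ≠ j → f j (p i) = a := by
    intro i hi
    have h1 : p i ∈ affineSpan ℝ (p '' {i | i ≠ j}) :=
      subset_affineSpan ℝ _ ⟨i, hi, rfl⟩
    have h2 : p i0 ∈ affineSpan ℝ (p '' {i | i ≠ j}) :=
      subset_affineSpan ℝ _ ⟨i0, hi0, rfl⟩
    have hz := hker j _ (AffineSubspace.vsub_mem_direction h1 h2)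
    rw [vsub_eq_sub, map_sub] at hz
    rw [hadef]
    linarith
  have hspan : affineSpan ℝ (Set.range p) = ⊤ := by
    rw [hp.affineSpan_eq_top_iff_card_eq_finrank_add_one]
    simp [finrank_euclideanSpace_fin]
  have hamem : a ≤ b := hside j (subset_convexHull ℝ _ (Set.mem_range_self i0))
  have hab : a < b := by
    rcases lt_or_eq_of_le hamem with h | h
    · exact h
    · exfalso
      apply hf0 j
      have hvs : vectorSpan ℝ (Set.range p) = ⊤ := by
        rw [← AffineSubspace.direction_top ℝ (EuclideanSpace ℝ (Fin d)) (EuclideanSpace ℝ (Fin d)), ← hspan, direction_affineSpan]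
      have hle : vectorSpan ℝ (Set.range p) ≤ LinearMap.ker (f j) := by
        rw [vectorSpan_def]
        apply Submodule.span_le.2
        rintro w ⟨y, ⟨i, rfl⟩, z, ⟨k, rfl⟩, rfl⟩
        have hyi : f j (p i) = b := by
          rcases Decidable.eq_or_ne i j with rfl | hi
          · rfl
          · rw [ha i hi, h]
        have hyk : f j (p k) = b := by
          rcases Decidable.eq_or_ne k j with rfl | hk
          · rfl
          · rw [ha k hk, h]
        simp only [SetLike.mem_coe, LinearMap.mem_ker, vsub_eq_sub, map_sub, hyi, hyk, sub_self]
      ext w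
      have hw : w ∈ LinearMap.ker (f j) := hle (hvs ▸ Submodule.mem_top)
      simpa using hw
  set v : EuclideanSpace ℝ (Fin d) := x - p j with hv
  set c : ℝ := (b - a)⁻¹ with hc
  have hcpos : 0 < c := inv_pos.2 (by linarith)
  set g : EuclideanSpace ℝ (Fin d) →ₗ[ℝ] ℝ := c • f j with hg
  set L : EuclideanSpace ℝ (Fin d) →ₗ[ℝ] EuclideanSpace ℝ (Fin d) :=
    LinearMap.id + g.smulRight v with hL
  set t : EuclideanSpace ℝ (Fin d) := -((a * c) • v) with ht
  have hLa : ∀ y, L y = y + (c * f j y) • v := by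
    intro y; simp [hL, hg, mul_comm]
  obtain ⟨A, hAcoe⟩ : ∃ A : EuclideanSpace ℝ (Fin d) →ᵃ[ℝ] EuclideanSpace ℝ (Fin d),
      ∀ y, A y = L y + t :=
    ⟨⟨fun y => L y + t, L, by
      intro y w
      simp only [vadd_eq_add, map_add]
      abel⟩, fun _ => rfl⟩
  have hAp : ∀ i, A (p i) = if i = j then x else p i := by
    intro i
    have key : A (p i) = p i + ((f j (p i) - a) * c) • v := by
      rw [hAcoe, hLa, ht, sub_mul, sub_smul, mul_comm a c, mul_comm (f j (p i)) c]
      abel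
    rcases Decidable.eq_or_ne i j with rfl | hi
    · rw [key, if_pos rfl, ← hb, mul_inv_cancel₀ (by linarith : b - a ≠ 0), one_smul, hv]
      abel
    · rw [key, ha i hi, sub_self, zero_mul, zero_smul, add_zero, if_neg hi]
  set q : Fin (d + 1) → EuclideanSpace ℝ (Fin d) := fun i => if i = j then x else p i with hq
  have hrange : ⇑A '' Set.range p = Set.range q := by
    have hcomp : ⇑A ∘ p = q := funext hAp
    rw [← Set.range_comp, hcomp]
  have hqQ : Set.range q ⊆ (Q : Set (EuclideanSpace ℝ (Fin d))) := by
    rintro _ ⟨i, rfl⟩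
    simp only [hq]
    split
    · exact hx
    · exact hpQ (Set.mem_range_self i)
  have hdet : LinearMap.det L = 1 + c * (f j x - b) := by
    rw [hL, det_id_add_smulRight, hg, hb, hv]
    simp only [LinearMap.smul_apply, smul_eq_mul, map_sub]
    ring
  have hdet1 : 1 < LinearMap.det L := by
    have hpos : 0 < c * (f j x - b) := mul_pos hcpos (sub_pos.2 (hb ▸ hcon))
    rw [hdet]; linarith
  set S : Set (EuclideanSpace ℝ (Fin d)) := convexHull ℝ (Set.range p) with hS
  have hvolA : volume (⇑A '' S) = ENNReal.ofReal |LinearMap.det L| * volume S := by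
    have h1 : ⇑A '' S = (fun z => t + z) '' (⇑L '' S) := by
      rw [Set.image_image]
      apply Set.image_congr
      intro y _
      rw [hAcoe, add_comm]
    rw [h1, Set.image_add_left, measure_preimage_add]
    exact Measure.addHaar_image_linearMap volume L S
  have hconv : ⇑A '' S = convexHull ℝ (Set.range q) := by
    rw [hS, AffineMap.image_convexHull, hrange]
  have hSpos : 0 < volume S := by
    apply MeasureTheory.Measure.measure_pos_of_nonempty_interior
    rw [hS, interior_convexHull_nonempty_iff_affineSpan_eq_top]
    exact hspan
  have hSfin : volume S < ⊤ :=
    ((Set.finite_range p).isCompact_convexHull ℝ).measure_lt_top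
  have hle := hmax q hqQ
  rw [← hconv, hvolA] at hle
  have h1lt : (1 : ENNReal) < ENNReal.ofReal |LinearMap.det L| := by
    rw [ENNReal.one_lt_ofReal]
    exact lt_of_lt_of_le hdet1 (le_abs_self _)
  have hstrict : volume S < ENNReal.ofReal |LinearMap.det L| * volume S := by
    conv_lhs => rw [← one_mul (volume S)]
    exact ENNReal.mul_lt_mul_left hSpos.ne' hSfin.ne h1lt
  exact absurd hle (not_le.2 hstrict)
end

section
/- For a finite point set S in ℝ^d in general position, the map sending a subset G ⊆ S in convex position to S ∩ conv(G) is a bijection between the collection of subsets of S in convex position and the collection of islands in S; its inverse sends an island I to the set of vertices (extreme points) of conv(I). In particular, the number of subsets of S in convex position equals the number of islands in S. -/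
open Set

variable {E : Type*} [NormedAddCommGroup E] [NormedSpace ℝ E]

/-- If `p ∈ G` and `p` is not in the convex hull of `G \ {p}`, then `conv G \ {p}` is convex. -/
lemma aux_convex_diff {G : Set E} {p : E}
    (hp : p ∉ convexHull ℝ (G \ {p})) :
    Convex ℝ (convexHull ℝ G \ {p}) := by
  rcases Set.eq_empty_or_nonempty (G \ {p}) with h | h
  · have hG : G ⊆ {p} := by
      intro x hx
      by_contra hxp
      exact (Set.eq_empty_iff_forall_notMem.1 h x) ⟨hx, hxp⟩
    have : convexHull ℝ G ⊆ {p} := by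
      calc convexHull ℝ G ⊆ convexHull ℝ {p} := convexHull_mono hG
        _ = {p} := convexHull_singleton p
    have : convexHull ℝ G \ {p} = ∅ := by
      apply Set.eq_empty_iff_forall_notMem.2
      intro x hx; exact hx.2 (this hx.1)
    rw [this]; exact convex_empty
  · set s := G \ {p} with hs
    have hGi : G ⊆ insert p s := by
      intro x hx
      by_cases hxp : x = p
      · exact hxp ▸ Set.mem_insert _ _
      · exact Set.mem_insert_of_mem _ ⟨hx, hxp⟩
    have hconv : convexHull ℝ G ⊆ convexHull ℝ (insert p s) := convexHull_mono hGi
    rw [convexHull_insert h] at hconv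
    rintro x hx y hy a b ha hb hab
    refine ⟨(convex_convexHull ℝ G) hx.1 hy.1 ha hb hab, ?_⟩
    intro hcon
    have hcon : a • x + b • y = p := hcon
    -- a, b must both be positive
    rcases ha.eq_or_lt with rfl | ha'
    · simp at hab; rw [hab] at hcon; simp at hcon; exact hy.2 (by simp [hcon])
    rcases hb.eq_or_lt with rfl | hb'
    · simp at hab; rw [hab] at hcon; simp at hcon; exact hx.2 (by simp [hcon])
    -- decompose x and y
    have hx2 := hconv hx.1
    have hy2 := hconv hy.1
    simp only [mem_convexJoin, Set.mem_singleton_iff, segment, Set.mem_setOf_eq] at hx2 hy2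
    obtain ⟨p1, hp1, x', hx', u, u', hu, hu', huu, hxe⟩ := hx2
    obtain ⟨p2, hp2, y', hy', v, v', hv, hv', hvv, hye⟩ := hy2
    rw [hp1] at hxe
    rw [hp2] at hye
    -- p = (a*u + b*v) • p + (a*u') • x' + (b*v') • y'
    have key : (a * u' + b * v') • p = (a * u') • x' + (b * v') • y' := by
      have h1 : (a * u + b * v) • p + (a * u') • x' + (b * v') • y' = p := by
        conv_rhs => rw [← hcon, ← hxe, ← hye]
        module
      have h2 : a * u + b * v + (a * u' + b * v') = 1 := by
        have := huu; have := hvv; nlinarith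
      have h3 : (1 : ℝ) - (a * u + b * v) = a * u' + b * v' := by linarith
      have h5 : (a * u' + b * v') • p = p - (a * u + b * v) • p := by
        rw [← h3, sub_smul, one_smul]
      have h1' : (a * u + b * v) • p + ((a * u') • x' + (b * v') • y') = p := by
        rw [← add_assoc]; exact h1
      have h6 : (a * u') • x' + (b * v') • y' = p - (a * u + b * v) • p :=
        eq_sub_of_add_eq' h1'
      rw [h5, h6]
    set c := a * u' + b * v' with hc
    have hau' : 0 ≤ a * u' := mul_nonneg ha hu'
    have hbv' : 0 ≤ b * v' := mul_nonneg hb hv'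
    rcases (add_nonneg hau' hbv').eq_or_lt with hc0 | hcpos
    · -- c = 0 forces u' = v' = 0, hence x = p, contradiction
      have hau0 : a * u' = 0 := le_antisymm (by linarith) hau'
      have hu'0 : u' = 0 := by
        rcases mul_eq_zero.1 hau0 with h | h
        · exact absurd h (ne_of_gt ha')
        · exact h
      have : x = p := by
        rw [← hxe, hu'0]; simp
        have : u = 1 := by linarith
        rw [this, one_smul]
      exact hx.2 (by simp [this])
    · -- c > 0: p is a convex combination of x', y' ∈ conv s
      have hmem : (a * u' / c) • x' + (b * v' / c) • y' ∈ convexHull ℝ s :=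
        (convex_iff_div.1 (convex_convexHull ℝ s)) hx' hy' hau' hbv' hcpos
      have hcne : c ≠ 0 := ne_of_gt hcpos
      have h7 : c • ((a * u' / c) • x' + (b * v' / c) • y') = c • p := by
        rw [key, smul_add, smul_smul, smul_smul]
        congr 1 <;> congr 1 <;> field_simp
      have : p = (a * u' / c) • x' + (b * v' / c) • y' :=
        (smul_right_injective E hcne h7).symm
      exact hp (this ▸ hmem)

/-- The extreme points of the convex hull of a convex-independent set are exactly the set. -/
lemma aux_extremePoints_eq {G : Set E}
    (hG : ∀ p ∈ G, p ∉ convexHull ℝ (G \ {p})) :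
    (convexHull ℝ G).extremePoints ℝ = G := by
  apply Set.Subset.antisymm extremePoints_convexHull_subset
  intro p hpG
  rw [(convex_convexHull ℝ G).mem_extremePoints_iff_convex_diff]
  exact ⟨subset_convexHull ℝ G hpG, aux_convex_diff (hG p hpG)⟩

/-- For a finite point set `S ⊆ ℝ^d` in general position, the map `G ↦ S ∩ conv G` is a
bijection from the subsets of `S` in convex position onto the islands in `S`, with inverse
sending an island `I` to the set of extreme points of `conv I`. In particular the number of
subsets of `S` in convex position equals the number of islands in `S`. -/
theorem convexPosition_islands_bijection
    (d : ℕ) (S : Set (EuclideanSpace ℝ (Fin d))) (hS : S.Finite)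
    (hgp : ∀ T : Finset (EuclideanSpace ℝ (Fin d)), ↑T ⊆ S → T.card ≤ d + 1 →
      AffineIndependent ℝ (fun x : T => (x : EuclideanSpace ℝ (Fin d)))) :
    Set.BijOn (fun G => S ∩ convexHull ℝ G)
      {G | G ⊆ S ∧ ∀ p ∈ G, p ∉ convexHull ℝ (G \ {p})}
      {I | I ⊆ S ∧ convexHull ℝ I ∩ S = I} ∧
    Set.InvOn (fun I => Set.extremePoints ℝ (convexHull ℝ I))
      (fun G => S ∩ convexHull ℝ G)
      {G | G ⊆ S ∧ ∀ p ∈ G, p ∉ convexHull ℝ (G \ {p})}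
      {I | I ⊆ S ∧ convexHull ℝ I ∩ S = I} ∧
    Nat.card {G | G ⊆ S ∧ ∀ p ∈ G, p ∉ convexHull ℝ (G \ {p})}
      = Nat.card {I | I ⊆ S ∧ convexHull ℝ I ∩ S = I} := by
  set f : Set (EuclideanSpace ℝ (Fin d)) → Set (EuclideanSpace ℝ (Fin d)) :=
    fun G => S ∩ convexHull ℝ G with hf
  set g : Set (EuclideanSpace ℝ (Fin d)) → Set (EuclideanSpace ℝ (Fin d)) :=
    fun I => Set.extremePoints ℝ (convexHull ℝ I) with hg
  set A := {G | G ⊆ S ∧ ∀ p ∈ G, p ∉ convexHull ℝ (G \ {p})} with hA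
  set B := {I | I ⊆ S ∧ convexHull ℝ I ∩ S = I} with hB
  -- For G ⊆ S, conv (S ∩ conv G) = conv G
  have hhull : ∀ G ⊆ S, convexHull ℝ (S ∩ convexHull ℝ G) = convexHull ℝ G := by
    intro G hGS
    apply Set.Subset.antisymm
    · calc convexHull ℝ (S ∩ convexHull ℝ G) ⊆ convexHull ℝ (convexHull ℝ G) :=
            convexHull_mono Set.inter_subset_right
        _ = convexHull ℝ G := (convex_convexHull ℝ G).convexHull_eq
    · exact convexHull_mono (Set.subset_inter hGS (subset_convexHull ℝ G))
  -- For finite I, conv (extremePoints (conv I)) = conv I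
  have hKM : ∀ I : Set (EuclideanSpace ℝ (Fin d)), I.Finite →
      convexHull ℝ ((convexHull ℝ I).extremePoints ℝ) = convexHull ℝ I := by
    intro I hI
    have hcomp : IsCompact (convexHull ℝ I) := hI.isCompact_convexHull ℝ
    have hclo := closure_convexHull_extremePoints hcomp (convex_convexHull ℝ I)
    have hEfin : ((convexHull ℝ I).extremePoints ℝ).Finite :=
      hI.subset extremePoints_convexHull_subset
    calc convexHull ℝ ((convexHull ℝ I).extremePoints ℝ)
        = closure (convexHull ℝ ((convexHull ℝ I).extremePoints ℝ)) :=
          ((hEfin.isCompact_convexHull ℝ).isClosed.closure_eq).symm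
      _ = convexHull ℝ I := hclo
  have hMaps : Set.MapsTo f A B := by
    rintro G ⟨hGS, _⟩
    refine ⟨Set.inter_subset_left, ?_⟩
    rw [hf, hhull G hGS, Set.inter_comm]
  have hLeft : Set.LeftInvOn g f A := by
    rintro G ⟨hGS, hGpos⟩
    show (convexHull ℝ (S ∩ convexHull ℝ G)).extremePoints ℝ = G
    rw [hhull G hGS]
    exact aux_extremePoints_eq hGpos
  have hRight : Set.RightInvOn g f B := by
    rintro I ⟨hIS, hIisl⟩
    show S ∩ convexHull ℝ ((convexHull ℝ I).extremePoints ℝ) = I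
    rw [hKM I (hS.subset hIS), Set.inter_comm]
    exact hIisl
  have hgA : Set.MapsTo g B A := by
    rintro I ⟨hIS, _⟩
    refine ⟨(extremePoints_convexHull_subset).trans hIS, ?_⟩
    exact convexIndependent_set_iff_notMem_convexHull_diff.1
      (convex_convexHull ℝ I).convexIndependent_extremePoints
  have hBij : Set.BijOn f A B := by
    refine ⟨hMaps, hLeft.injOn, ?_⟩
    intro I hI
    exact ⟨g I, hgA hI, hRight hI⟩
  refine ⟨hBij, ⟨hLeft, hRight⟩, ?_⟩
  exact Nat.card_congr (Set.BijOn.equiv f hBij)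
end

section
/- Let S be a set of n points in general position in ℝ^d with n ≥ k ≥ d. Then S contains at least binom(n,d) / binom(k,d) k-islands. In particular, for fixed d and k, every such set contains Ω(n^d) k-islands. -/
open RealInnerProductSpace Module Finset

/-- In general position, at most `d` points of `S` lie on a common hyperplane. -/
lemma island_aux_card_le {d : ℕ} (hd : 1 ≤ d) (S : Finset (EuclideanSpace ℝ (Fin d)))
    (hgp : ∀ T : Finset (EuclideanSpace ℝ (Fin d)), T ⊆ S → T.card ≤ d + 1 →
      AffineIndependent ℝ (fun x : T => (x : EuclideanSpace ℝ (Fin d))))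
    (w : EuclideanSpace ℝ (Fin d)) (hw : w ≠ 0) (r : ℝ)
    (A : Finset (EuclideanSpace ℝ (Fin d))) (hAS : A ⊆ S)
    (hA : ∀ y ∈ A, ⟪w, y⟫ = r) : A.card ≤ d := by
  by_contra hcon
  push_neg at hcon
  obtain ⟨B, hBA, hB⟩ := Finset.exists_subset_card_eq hcon
  have hi : AffineIndependent ℝ (fun x : B => (x : EuclideanSpace ℝ (Fin d))) :=
    hgp B (hBA.trans hAS) (le_of_eq hB)
  have hcardB : Fintype.card B = d + 1 := by simp [hB]
  have hfr : finrank ℝ (vectorSpan ℝ (Set.range (fun x : B => (x : EuclideanSpace ℝ (Fin d))))) = d :=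
    hi.finrank_vectorSpan hcardB
  set φ : EuclideanSpace ℝ (Fin d) →ₗ[ℝ] ℝ := innerₛₗ ℝ w with hφ
  have hφne : LinearMap.range φ ≠ ⊥ := by
    intro h
    have : φ w = 0 := by
      have : φ w ∈ LinearMap.range φ := LinearMap.mem_range_self _ _
      rw [h] at this; simpa using this
    rw [hφ] at this
    simp only [innerₛₗ_apply_apply] at this
    exact hw (inner_self_eq_zero.mp this)
  have hsub : vectorSpan ℝ (Set.range (fun x : B => (x : EuclideanSpace ℝ (Fin d)))) ≤
      LinearMap.ker φ := by
    rw [vectorSpan_def, Submodule.span_le]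
    rintro v ⟨a, ha, b, hb, rfl⟩
    simp only [SetLike.mem_coe, LinearMap.mem_ker, vsub_eq_sub, map_sub]
    obtain ⟨⟨a', ha'⟩, rfl⟩ := ha
    obtain ⟨⟨b', hb'⟩, rfl⟩ := hb
    rw [hφ]
    simp only [innerₛₗ_apply_apply]
    rw [hA _ (hBA ha'), hA _ (hBA hb'), sub_self]
  have h1 : d ≤ finrank ℝ (LinearMap.ker φ) := by
    have := Submodule.finrank_mono hsub
    omega
  have h2 : finrank ℝ (LinearMap.range φ) + finrank ℝ (LinearMap.ker φ) =
      finrank ℝ (EuclideanSpace ℝ (Fin d)) := LinearMap.finrank_range_add_finrank_ker φ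
  have h3 : 1 ≤ finrank ℝ (LinearMap.range φ) := by
    rcases Nat.eq_zero_or_pos (finrank ℝ (LinearMap.range φ)) with h | h
    · exact absurd (Submodule.finrank_eq_zero.mp h) hφne
    · exact h
  rw [finrank_euclideanSpace_fin] at h2
  omega

/-- Every `d`-subset of `S` extends to a `k`-island. -/
lemma island_exists {d k : ℕ} (hd : 1 ≤ d) (hdk : d ≤ k)
    (S : Finset (EuclideanSpace ℝ (Fin d))) (hkS : k ≤ S.card)
    (hgp : ∀ T : Finset (EuclideanSpace ℝ (Fin d)), T ⊆ S → T.card ≤ d + 1 →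
      AffineIndependent ℝ (fun x : T => (x : EuclideanSpace ℝ (Fin d))))
    (T : Finset (EuclideanSpace ℝ (Fin d))) (hTS : T ⊆ S) (hT : T.card = d) :
    ∃ I : Finset (EuclideanSpace ℝ (Fin d)), T ⊆ I ∧ I ⊆ S ∧ I.card = k ∧
      convexHull ℝ (I : Set (EuclideanSpace ℝ (Fin d))) ∩ (S : Set (EuclideanSpace ℝ (Fin d)))
        = (I : Set (EuclideanSpace ℝ (Fin d))) := by
  classical
  obtain ⟨t₀, ht₀⟩ : T.Nonempty := Finset.card_pos.mp (by omega)
  -- a hyperplane through T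
  have hspan : vectorSpan ℝ (T : Set (EuclideanSpace ℝ (Fin d))) ≠ ⊤ := by
    intro h
    have h1 : finrank ℝ (vectorSpan ℝ (Set.range (fun x : T => (x : EuclideanSpace ℝ (Fin d)))))
        ≤ d - 1 := finrank_vectorSpan_range_le ℝ _ (by simp [hT]; omega)
    rw [Subtype.range_coe_subtype] at h1
    rw [show {x | x ∈ T} = (T : Set (EuclideanSpace ℝ (Fin d))) from rfl] at h1
    rw [h, finrank_top, finrank_euclideanSpace_fin] at h1
    omega
  have hbot : (vectorSpan ℝ (T : Set (EuclideanSpace ℝ (Fin d))))ᗮ ≠ ⊥ := by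
    intro h; exact hspan (Submodule.orthogonal_eq_bot_iff.mp h)
  obtain ⟨w, hwmem, hw⟩ := Submodule.ne_bot_iff _ |>.mp hbot
  set c : ℝ := ⟪w, t₀⟫ with hcdef
  have hc : ∀ y ∈ T, ⟪w, y⟫ = c := by
    intro y hy
    have hv : y - t₀ ∈ vectorSpan ℝ (T : Set (EuclideanSpace ℝ (Fin d))) := by
      simpa using vsub_mem_vectorSpan ℝ (Finset.mem_coe.mpr hy) (Finset.mem_coe.mpr ht₀)
    have h0 : ⟪y - t₀, w⟫ = 0 := (Submodule.mem_orthogonal _ w).mp hwmem _ hv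
    rw [inner_sub_left] at h0
    have h1 := sub_eq_zero.mp h0
    rw [hcdef]
    linarith [h1, real_inner_comm w y, real_inner_comm w t₀, real_inner_comm y w, real_inner_comm t₀ w]
  set μ : EuclideanSpace ℝ (Fin d) → ℝ := fun z => |⟪w, z⟫ - c| with hμ
  -- choose the k - d closest points
  have hcards : k - d ≤ (S \ T).card := by rw [Finset.card_sdiff_of_subset hTS]; omega
  obtain ⟨R, hRmem, hRmin⟩ := Finset.exists_min_image ((S \ T).powersetCard (k - d))
    (fun R => ∑ y ∈ R, μ y) (Finset.powersetCard_nonempty.mpr hcards)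
  rw [Finset.mem_powersetCard] at hRmem
  obtain ⟨hRsub, hRcard⟩ := hRmem
  have hdisj : Disjoint T R := by
    rw [Finset.disjoint_left]
    intro a haT haR
    exact (Finset.mem_sdiff.mp (hRsub haR)).2 haT
  have hIS : T ∪ R ⊆ S := Finset.union_subset hTS (hRsub.trans (Finset.sdiff_subset))
  have hIcard : (T ∪ R).card = k := by
    rw [Finset.card_union_of_disjoint hdisj, hT, hRcard]; omega
  refine ⟨T ∪ R, Finset.subset_union_left, hIS, hIcard, ?_⟩
  -- minimality property
  have hmin : ∀ x ∈ S, x ∉ T ∪ R → ∀ y ∈ T ∪ R, μ y ≤ μ x := by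
    intro x hxS hxI y hy
    rcases Finset.mem_union.mp hy with hyT | hyR
    · have h0 : μ y = 0 := by
        show |⟪w, y⟫ - c| = 0
        rw [hc y hyT, sub_self, abs_zero]
      rw [h0]
      have : μ x = |⟪w, x⟫ - c| := rfl
      rw [this]
      positivity
    · by_contra hlt
      push_neg at hlt
      have hxR : x ∉ R := fun h => hxI (Finset.mem_union_right _ h)
      have hxT : x ∉ T := fun h => hxI (Finset.mem_union_left _ h)
      have hxe : x ∉ R.erase y := fun h => hxR (Finset.mem_of_mem_erase h)
      have hRpos : 1 ≤ R.card := Finset.card_pos.mpr ⟨y, hyR⟩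
      have hR'mem : insert x (R.erase y) ∈ (S \ T).powersetCard (k - d) := by
        rw [Finset.mem_powersetCard]
        constructor
        · intro z hz
          rcases Finset.mem_insert.mp hz with rfl | hz
          · exact Finset.mem_sdiff.mpr ⟨hxS, hxT⟩
          · exact hRsub (Finset.mem_of_mem_erase hz)
        · rw [Finset.card_insert_of_notMem hxe, Finset.card_erase_of_mem hyR]
          omega
      have hle := hRmin _ hR'mem
      rw [Finset.sum_insert hxe, Finset.sum_erase_eq_sub hyR] at hle
      linarith
  -- island property
  refine Set.Subset.antisymm ?_ (Set.subset_inter (subset_convexHull ℝ _)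
    (Finset.coe_subset.mpr hIS))
  rintro x ⟨hxconv, hxS'⟩
  have hxS : x ∈ S := hxS'
  by_contra hxmem
  have hxI : x ∉ T ∪ R := fun h => hxmem (Finset.mem_coe.mpr h)
  obtain ⟨l, hl0, hl1, hlx⟩ := Finset.mem_convexHull.mp hxconv
  have hxrep : ∑ y ∈ T ∪ R, l y • y = x := by
    have h := Finset.centerMass_eq_of_sum_1 (T ∪ R) id hl1
    rw [hlx] at h
    simpa using h.symm
  have hphix : ⟪w, x⟫ - c = ∑ y ∈ T ∪ R, l y * (⟪w, y⟫ - c) := by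
    have h1 : ⟪w, x⟫ = ∑ y ∈ T ∪ R, l y * ⟪w, y⟫ := by
      rw [← hxrep, inner_sum]
      exact Finset.sum_congr rfl fun y _ => real_inner_smul_right w y (l y)
    have h2 : ∀ y ∈ T ∪ R, l y * (⟪w, y⟫ - c) = l y * ⟪w, y⟫ - l y * c :=
      fun y _ => mul_sub _ _ _
    rw [Finset.sum_congr rfl h2, Finset.sum_sub_distrib, ← Finset.sum_mul, hl1, one_mul, ← h1]
  have hle1 : μ x ≤ ∑ y ∈ T ∪ R, l y * μ y := by
    show |⟪w, x⟫ - c| ≤ ∑ y ∈ T ∪ R, l y * |⟪w, y⟫ - c|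
    rw [hphix]
    calc |∑ y ∈ T ∪ R, l y * (⟪w, y⟫ - c)| ≤ ∑ y ∈ T ∪ R, |l y * (⟪w, y⟫ - c)| :=
          Finset.abs_sum_le_sum_abs _ _
      _ = ∑ y ∈ T ∪ R, l y * |⟪w, y⟫ - c| :=
          Finset.sum_congr rfl fun y hy => by rw [abs_mul, abs_of_nonneg (hl0 y hy)]
  have hle2 : ∑ y ∈ T ∪ R, l y * μ y ≤ μ x := by
    calc ∑ y ∈ T ∪ R, l y * μ y ≤ ∑ y ∈ T ∪ R, l y * μ x :=
          Finset.sum_le_sum fun y hy =>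
            mul_le_mul_of_nonneg_left (hmin x hxS hxI y hy) (hl0 y hy)
      _ = μ x := by rw [← Finset.sum_mul, hl1, one_mul]
  have hsum0 : ∑ y ∈ T ∪ R, l y * (μ x - μ y) = 0 := by
    have h2 : ∀ y ∈ T ∪ R, l y * (μ x - μ y) = l y * μ x - l y * μ y :=
      fun y _ => mul_sub _ _ _
    rw [Finset.sum_congr rfl h2, Finset.sum_sub_distrib, ← Finset.sum_mul, hl1, one_mul]
    linarith
  have hterm := (Finset.sum_eq_zero_iff_of_nonneg (fun y hy =>
    mul_nonneg (hl0 y hy) (sub_nonneg.mpr (hmin x hxS hxI y hy)))).mp hsum0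
  have hmueq : ∀ z ∈ T ∪ R, l z ≠ 0 → |⟪w, z⟫ - c| = |⟪w, x⟫ - c| := by
    intro z hz hlz
    rcases mul_eq_zero.mp (hterm z hz) with h | h
    · exact absurd h hlz
    · have h' : μ x = μ z := sub_eq_zero.mp h
      exact h'.symm
  have hsum2 : ∑ z ∈ T ∪ R, l z * ((⟪w, x⟫ - c) - (⟪w, z⟫ - c)) = 0 := by
    have h2 : ∀ z ∈ T ∪ R, l z * ((⟪w, x⟫ - c) - (⟪w, z⟫ - c)) =
        l z * (⟪w, x⟫ - c) - l z * (⟪w, z⟫ - c) := fun z _ => mul_sub _ _ _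
    rw [Finset.sum_congr rfl h2, Finset.sum_sub_distrib, ← Finset.sum_mul, hl1, one_mul,
      ← hphix, sub_self]
  have hsign : ∀ y ∈ T ∪ R, l y ≠ 0 → ⟪w, y⟫ = ⟪w, x⟫ := by
    intro y hy hly
    rcases lt_trichotomy (⟪w, x⟫ - c) 0 with hneg | h0 | hpos
    · have hnp : ∀ z ∈ T ∪ R, l z * ((⟪w, x⟫ - c) - (⟪w, z⟫ - c)) ≤ 0 := by
        intro z hz
        rcases eq_or_ne (l z) 0 with h | h
        · simp [h]
        · rcases abs_eq_abs.mp (hmueq z hz h) with he | he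
          · rw [he]; simp
          · rw [he]
            have := hl0 z hz
            nlinarith
      have hz0 := (Finset.sum_eq_zero_iff_of_nonpos hnp).mp hsum2 y hy
      rcases mul_eq_zero.mp hz0 with h | h
      · exact absurd h hly
      · have := sub_eq_zero.mp h
        linarith
    · have h1 : ⟪w, x⟫ = c := by linarith
      have h2 := hmueq y hy hly
      rw [h1, sub_self, abs_zero, abs_eq_zero] at h2
      rw [h1]
      linarith [sub_eq_zero.mp h2]
    · have hnn : ∀ z ∈ T ∪ R, 0 ≤ l z * ((⟪w, x⟫ - c) - (⟪w, z⟫ - c)) := by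
        intro z hz
        rcases eq_or_ne (l z) 0 with h | h
        · simp [h]
        · rcases abs_eq_abs.mp (hmueq z hz h) with he | he
          · rw [he]; simp
          · rw [he]
            have := hl0 z hz
            nlinarith
      have hz0 := (Finset.sum_eq_zero_iff_of_nonneg hnn).mp hsum2 y hy
      rcases mul_eq_zero.mp hz0 with h | h
      · exact absurd h hly
      · have := sub_eq_zero.mp h
        linarith
  -- the tight points lie on a hyperplane through x
  set J : Finset (EuclideanSpace ℝ (Fin d)) :=
    (T ∪ R).filter (fun z => ⟪w, z⟫ = ⟪w, x⟫) with hJ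
  have hsubJ : ∀ z ∈ T ∪ R, l z ≠ 0 → z ∈ J := fun z hz hlz =>
    Finset.mem_filter.mpr ⟨hz, hsign z hz hlz⟩
  have hzero : ∀ z ∈ T ∪ R, z ∉ J → l z = 0 := by
    intro z hz hzJ
    by_contra h
    exact hzJ (hsubJ z hz h)
  have hsumJ : ∑ z ∈ J, l z = 1 := by
    rw [← hl1]
    exact Finset.sum_subset (Finset.filter_subset _ _) hzero
  have hrepJ : ∑ z ∈ J, l z • z = x := by
    rw [← hxrep]
    exact Finset.sum_subset (Finset.filter_subset _ _)
      (fun z hz hzJ => by rw [hzero z hz hzJ, zero_smul])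
  have hxJ : x ∈ convexHull ℝ (J : Set (EuclideanSpace ℝ (Fin d))) := by
    have hm := Finset.centerMass_mem_convexHull J
      (fun z hz => hl0 z (Finset.filter_subset _ _ hz))
      (by rw [hsumJ]; norm_num) (fun z hz => Finset.mem_coe.mpr hz) (z := id)
    rwa [Finset.centerMass_eq_of_sum_1 _ id hsumJ, show ∑ z ∈ J, l z • id z = x from hrepJ] at hm
  have haff : x ∈ affineSpan ℝ (J : Set (EuclideanSpace ℝ (Fin d))) :=
    convexHull_subset_affineSpan _ hxJ
  have hxA : x ∈ insert x J := Finset.mem_insert_self _ _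
  have hAS : insert x J ⊆ S := by
    intro z hz
    rcases Finset.mem_insert.mp hz with rfl | hz
    · exact hxS
    · exact hIS (Finset.filter_subset _ _ hz)
  have hAinner : ∀ z ∈ insert x J, ⟪w, z⟫ = ⟪w, x⟫ := by
    intro z hz
    rcases Finset.mem_insert.mp hz with rfl | hz
    · rfl
    · exact (Finset.mem_filter.mp hz).2
  have hAcard : (insert x J).card ≤ d :=
    island_aux_card_le hd S hgp w hw _ _ hAS hAinner
  have hi : AffineIndependent ℝ (fun z : (insert x J : Finset (EuclideanSpace ℝ (Fin d))) =>
      (z : EuclideanSpace ℝ (Fin d))) := hgp _ hAS (by omega)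
  have hnot := hi.notMem_affineSpan_diff ⟨x, hxA⟩ Set.univ
  apply hnot
  have hJsub : (J : Set (EuclideanSpace ℝ (Fin d))) ⊆
      (fun z : (insert x J : Finset (EuclideanSpace ℝ (Fin d))) =>
        (z : EuclideanSpace ℝ (Fin d))) '' (Set.univ \ {⟨x, hxA⟩}) := by
    intro z hz
    have hzJ : z ∈ J := hz
    have hzx : z ≠ x := fun h => hxI (h ▸ (Finset.mem_filter.mp hzJ).1)
    refine ⟨⟨z, Finset.mem_insert_of_mem hzJ⟩, ⟨trivial, ?_⟩, rfl⟩
    intro h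
    rw [Set.mem_singleton_iff] at h
    exact hzx (congrArg Subtype.val h)
  exact affineSpan_mono ℝ hJsub haff

/-- Every set `S` of `n` points in general position in `ℝ^d` with `n ≥ k ≥ d` contains at
least `binom(n,d)/binom(k,d)` `k`-islands (hence `Ω(n^d)` of them for fixed `d` and `k`). -/
theorem card_k_islands_ge
    (d k n : ℕ) (hd : 1 ≤ d) (hdk : d ≤ k) (hkn : k ≤ n)
    (S : Finset (EuclideanSpace ℝ (Fin d))) (hcard : S.card = n)
    (hgp : ∀ T : Finset (EuclideanSpace ℝ (Fin d)), T ⊆ S → T.card ≤ d + 1 →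
      AffineIndependent ℝ (fun x : T => (x : EuclideanSpace ℝ (Fin d)))) :
    ((n.choose d : ℝ) / (k.choose d : ℝ)) ≤
      (Set.ncard {I : Finset (EuclideanSpace ℝ (Fin d)) |
        I ⊆ S ∧ I.card = k ∧
        convexHull ℝ (I : Set (EuclideanSpace ℝ (Fin d))) ∩ (S : Set (EuclideanSpace ℝ (Fin d)))
          = (I : Set (EuclideanSpace ℝ (Fin d)))} : ℝ) := by
  classical
  have hkS : k ≤ S.card := by omega
  set IslF : Finset (Finset (EuclideanSpace ℝ (Fin d))) :=
    S.powerset.filter (fun I => I.card = k ∧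
      convexHull ℝ (I : Set (EuclideanSpace ℝ (Fin d))) ∩ (S : Set (EuclideanSpace ℝ (Fin d)))
        = (I : Set (EuclideanSpace ℝ (Fin d)))) with hIslF
  have hset : {I : Finset (EuclideanSpace ℝ (Fin d)) |
      I ⊆ S ∧ I.card = k ∧
      convexHull ℝ (I : Set (EuclideanSpace ℝ (Fin d))) ∩ (S : Set (EuclideanSpace ℝ (Fin d)))
        = (I : Set (EuclideanSpace ℝ (Fin d)))} = ↑IslF := by
    ext I
    simp [hIslF, Finset.mem_filter, Finset.mem_powerset, and_assoc]
  rw [hset, Set.ncard_coe_finset]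
  have hF : ∀ T ∈ S.powersetCard d, ∃ I : Finset (EuclideanSpace ℝ (Fin d)),
      T ⊆ I ∧ I ⊆ S ∧ I.card = k ∧
      convexHull ℝ (I : Set (EuclideanSpace ℝ (Fin d))) ∩ (S : Set (EuclideanSpace ℝ (Fin d)))
        = (I : Set (EuclideanSpace ℝ (Fin d))) := by
    intro T hT
    rw [Finset.mem_powersetCard] at hT
    exact island_exists hd hdk S hkS hgp T hT.1 hT.2
  set F : Finset (EuclideanSpace ℝ (Fin d)) → Finset (EuclideanSpace ℝ (Fin d)) :=
    fun T => if h : T ∈ S.powersetCard d then (hF T h).choose else ∅ with hFdef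
  have hFspec : ∀ T ∈ S.powersetCard d, T ⊆ F T ∧ F T ⊆ S ∧ (F T).card = k ∧
      convexHull ℝ ((F T : Finset (EuclideanSpace ℝ (Fin d))) : Set (EuclideanSpace ℝ (Fin d)))
        ∩ (S : Set (EuclideanSpace ℝ (Fin d))) = ((F T) : Set (EuclideanSpace ℝ (Fin d))) := by
    intro T hT
    simp only [hFdef, dif_pos hT]
    exact (hF T hT).choose_spec
  have hcount : (S.powersetCard d).card ≤
      k.choose d * ((S.powersetCard d).image F).card := by
    apply Finset.card_le_mul_card_image
    intro I hI
    obtain ⟨T₀, hT₀, hFT₀⟩ := Finset.mem_image.mp hI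
    have hIk : I.card = k := by rw [← hFT₀]; exact (hFspec T₀ hT₀).2.2.1
    have hsub : (S.powersetCard d).filter (fun T => F T = I) ⊆ I.powersetCard d := by
      intro T hT
      rw [Finset.mem_filter] at hT
      obtain ⟨hT1, hT2⟩ := hT
      rw [Finset.mem_powersetCard]
      refine ⟨hT2 ▸ (hFspec T hT1).1, (Finset.mem_powersetCard.mp hT1).2⟩
    calc ((S.powersetCard d).filter (fun T => F T = I)).card ≤ (I.powersetCard d).card :=
          Finset.card_le_card hsub
      _ = k.choose d := by rw [Finset.card_powersetCard, hIk]
  have himg : (S.powersetCard d).image F ⊆ IslF := by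
    intro I hI
    obtain ⟨T₀, hT₀, hFT₀⟩ := Finset.mem_image.mp hI
    obtain ⟨_, h2, h3, h4⟩ := hFspec T₀ hT₀
    rw [hIslF, Finset.mem_filter, Finset.mem_powerset]
    exact ⟨hFT₀ ▸ h2, hFT₀ ▸ h3, hFT₀ ▸ h4⟩
  have hmain : n.choose d ≤ k.choose d * IslF.card := by
    calc n.choose d = (S.powersetCard d).card := by rw [Finset.card_powersetCard, hcard]
      _ ≤ k.choose d * ((S.powersetCard d).image F).card := hcount
      _ ≤ k.choose d * IslF.card := Nat.mul_le_mul_left _ (Finset.card_le_card himg)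
  have hkd : 0 < (k.choose d : ℝ) := by exact_mod_cast Nat.choose_pos hdk
  rw [div_le_iff₀ hkd]
  calc (n.choose d : ℝ) ≤ (k.choose d : ℝ) * (IslF.card : ℝ) := by exact_mod_cast hmain
    _ = (IslF.card : ℝ) * (k.choose d : ℝ) := mul_comm _ _
end
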